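/- Let n ≥ 1 and let P be a real polynomial in n+1 variables of total degree D. Then there exist polynomials H₀, H₁, …, H_D in n+1 variables such that each H_j is homogeneous of degree j and harmonic (Δ H_j = 0, where Δ = Σ_{i=1}^{n+1} ∂²/∂x_i²), and P(x) = Σ_{j=0}^{D} H_j(x) for every x ∈ ℝ^{n+1} with ‖x‖ = 1. -/

import Mathlib

open Finset MvPolynomial

namespace SphH

variable {n : ℕ}

/-- Laplacian. -/
noncomputable def L (p : MvPolynomial (Fin (n+1)) ℝ) : MvPolynomial (Fin (n+1)) ℝ :=
  ∑ i, pderiv i (pderiv i p)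

/-- squared radius -/
noncomputable def r2 (n : ℕ) : MvPolynomial (Fin (n+1)) ℝ := ∑ i, X i ^ 2

lemma degree_add (a b : Fin (n+1) →₀ ℕ) : (a + b).degree = a.degree + b.degree := by
  simp [Finsupp.degree_eq_weight_one, map_add]

lemma L_smul (a : ℝ) (p : MvPolynomial (Fin (n+1)) ℝ) : L (a • p) = a • L p := by
  simp [L, Finset.smul_sum]

lemma L_sum {ι : Type*} (s : Finset ι) (f : ι → MvPolynomial (Fin (n+1)) ℝ) :
    L (∑ j ∈ s, f j) = ∑ j ∈ s, L (f j) := by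
  simp only [L, map_sum]
  exact Finset.sum_comm

lemma X_mul_pderiv_monomial (i : Fin (n+1)) (d : Fin (n+1) →₀ ℕ) (a : ℝ) :
    X i * pderiv i (monomial d a) = (d i : ℝ) • monomial d a := by
  rw [pderiv_monomial]
  rcases Nat.eq_zero_or_pos (d i) with h | h
  · simp [h]
  · rw [X, monomial_mul, smul_monomial, one_mul,
      add_tsub_cancel_of_le (Finsupp.single_le_iff.2 h), mul_comm]
    simp [Algebra.smul_def]

lemma degree_eq_sum_univ (d : Fin (n+1) →₀ ℕ) : d.degree = ∑ i, d i := by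
  rw [Finsupp.degree]
  exact Finset.sum_subset (Finset.subset_univ _)
    (fun i _ hi => Finsupp.notMem_support_iff.1 hi)

lemma euler {u : MvPolynomial (Fin (n+1)) ℝ} {m : ℕ} (hu : u.IsHomogeneous m) :
    ∑ i, X i * pderiv i u = (m : ℝ) • u := by
  conv_lhs => rw [u.as_sum]
  conv_rhs => rw [u.as_sum]
  simp only [map_sum, Finset.mul_sum]
  rw [Finset.sum_comm, Finset.smul_sum]
  refine Finset.sum_congr rfl fun d hd => ?_
  have hdm : d.degree = m := by
    rw [Finsupp.degree_eq_weight_one]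
    exact hu (mem_support_iff.1 hd)
  calc ∑ i, X i * pderiv i (monomial d (coeff d u))
      = ∑ i, (d i : ℝ) • monomial d (coeff d u) := by
        exact Finset.sum_congr rfl fun i _ => X_mul_pderiv_monomial i d _
    _ = ((∑ i, d i : ℕ) : ℝ) • monomial d (coeff d u) := by
        rw [← Finset.sum_smul]; push_cast; ring_nf
    _ = (m : ℝ) • monomial d (coeff d u) := by rw [← degree_eq_sum_univ, hdm]

lemma pderiv_isHomogeneous {u : MvPolynomial (Fin (n+1)) ℝ} {m : ℕ} (hu : u.IsHomogeneous m)
    (i : Fin (n+1)) : (pderiv i u).IsHomogeneous (m - 1) := by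
  conv_lhs => rw [u.as_sum]
  rw [map_sum]
  apply IsHomogeneous.sum
  intro d hd
  rw [pderiv_monomial]
  rcases eq_or_ne (d i) 0 with h | h
  · simp only [h, Nat.cast_zero, mul_zero, monomial_zero]
    exact isHomogeneous_zero _ _ _
  · apply isHomogeneous_monomial
    have hdm : d.degree = m := by
      rw [Finsupp.degree_eq_weight_one]
      exact hu (mem_support_iff.1 hd)
    have h1 : Finsupp.single i 1 ≤ d := Finsupp.single_le_iff.2 (Nat.one_le_iff_ne_zero.2 h)
    have h2 := degree_add (d - Finsupp.single i 1) (Finsupp.single i 1)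
    rw [tsub_add_cancel_of_le h1, hdm] at h2
    have h3 : (Finsupp.single i 1).degree = 1 := by
      exact Finsupp.degree_single i 1
    omega

lemma L_isHomogeneous {u : MvPolynomial (Fin (n+1)) ℝ} {m : ℕ} (hu : u.IsHomogeneous m) :
    (L u).IsHomogeneous (m - 2) := by
  apply IsHomogeneous.sum
  intro i _
  have := pderiv_isHomogeneous (pderiv_isHomogeneous hu i) i
  rwa [Nat.sub_sub] at this

lemma pderiv_eq_zero_of_homog_zero {u : MvPolynomial (Fin (n+1)) ℝ}
    (hu : u.IsHomogeneous 0) (i : Fin (n+1)) : pderiv i u = 0 := by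
  conv_lhs => rw [u.as_sum]
  rw [map_sum]
  apply Finset.sum_eq_zero
  intro d hd
  have hd0 : d = 0 := by
    have hdm : d.degree = 0 := by
      rw [Finsupp.degree_eq_weight_one]
      exact hu (mem_support_iff.1 hd)
    exact (Finsupp.degree_eq_zero_iff d).1 hdm
  simp [pderiv_monomial, hd0]

lemma L_eq_zero_of_le_one {u : MvPolynomial (Fin (n+1)) ℝ} {m : ℕ} (hu : u.IsHomogeneous m)
    (hm : m ≤ 1) : L u = 0 := by
  apply Finset.sum_eq_zero
  intro i _
  interval_cases m
  · rw [pderiv_eq_zero_of_homog_zero hu i, map_zero]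
  · exact pderiv_eq_zero_of_homog_zero (by simpa using pderiv_isHomogeneous hu i) i

lemma L_mul (f g : MvPolynomial (Fin (n+1)) ℝ) :
    L (f * g) = L f * g + 2 * ∑ i, pderiv i f * pderiv i g + f * L g := by
  simp only [L, pderiv_mul, map_add, Finset.sum_add_distrib, Finset.sum_mul, Finset.mul_sum,
    two_mul]
  ring

lemma pderiv_r2 (i : Fin (n+1)) : pderiv i (r2 n) = 2 * X i := by
  rw [r2, map_sum]
  rw [Finset.sum_eq_single i]
  · rw [pderiv_pow, pderiv_X_self]; ring
  · intro j _ hj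
    rw [pderiv_pow, pderiv_X_of_ne hj]; ring
  · intro h; exact absurd (Finset.mem_univ i) h

lemma smul_nat (k : ℕ) (p : MvPolynomial (Fin (n+1)) ℝ) :
    ((k : ℕ) : ℝ) • p = (k : MvPolynomial (Fin (n+1)) ℝ) * p := by
  rw [smul_eq_C_mul, C_eq_coe_nat]

lemma L_r2 : L (r2 n) = ((2*(n+1) : ℕ) : MvPolynomial (Fin (n+1)) ℝ) := by
  have h : ∀ i : Fin (n+1), pderiv i (pderiv i (r2 n)) = 2 := by
    intro i
    rw [pderiv_r2]
    have h2 : (2 : MvPolynomial (Fin (n+1)) ℝ) * X i = C 2 * X i := by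
      rw [map_ofNat]
    rw [h2, pderiv_C_mul, pderiv_X_self, mul_one, map_ofNat]
  rw [L, Finset.sum_congr rfl fun i _ => h i, Finset.sum_const, Finset.card_univ,
    Fintype.card_fin, nsmul_eq_mul]
  push_cast
  ring

lemma L_r2_mul (q : MvPolynomial (Fin (n+1)) ℝ) :
    L (r2 n * q) = ((2*(n+1) : ℕ) : ℝ) • q + (4:ℝ) • (∑ i, X i * pderiv i q) + r2 n * L q := by
  rw [L_mul, L_r2]
  have h1 : ∀ i : Fin (n+1), pderiv i (r2 n) * pderiv i q = 2 * (X i * pderiv i q) := by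
    intro i; rw [pderiv_r2]; ring
  rw [Finset.sum_congr rfl fun i _ => h1 i, ← Finset.mul_sum]
  rw [smul_nat, smul_eq_C_mul, map_ofNat]
  ring

lemma r2_isHomogeneous : (r2 n).IsHomogeneous 2 := by
  apply IsHomogeneous.sum
  intro i _
  exact isHomogeneous_X_pow i 2

lemma key {u : MvPolynomial (Fin (n+1)) ℝ} {m : ℕ} (hu : u.IsHomogeneous m) (j : ℕ) :
    L (r2 n ^ (j+1) * u) =
      ((2*(j+1)*((n+1) + 2*m + 2*j) : ℕ) : ℝ) • (r2 n ^ j * u) + r2 n ^ (j+1) * L u := by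
  induction j with
  | zero =>
    rw [pow_one, pow_zero, one_mul, L_r2_mul, euler hu]
    rw [smul_nat, smul_nat, smul_eq_C_mul, smul_eq_C_mul, map_ofNat, C_eq_coe_nat]
    push_cast
    ring
  | succ j ih =>
    have hpow : r2 n ^ (j+1+1) * u = r2 n * (r2 n ^ (j+1) * u) := by ring
    have hhom : (r2 n ^ (j+1) * u).IsHomogeneous (2*(j+1) + m) := by
      simpa [mul_comm] using ((r2_isHomogeneous (n := n)).pow (j+1)).mul hu
    rw [hpow, L_r2_mul, euler hhom, ih]
    rw [smul_nat, smul_nat, smul_nat, smul_eq_C_mul, smul_eq_C_mul, map_ofNat, C_eq_coe_nat]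
    push_cast
    ring

lemma Lp_homog {p : MvPolynomial (Fin (n+1)) ℝ} {d : ℕ} (hp : p.IsHomogeneous d) (j : ℕ) :
    (L^[j] p).IsHomogeneous (d - 2*j) ∧ (d < 2*j → L^[j] p = 0) := by
  induction j with
  | zero => exact ⟨by simpa using hp, by omega⟩
  | succ j ih =>
    obtain ⟨h1, h2⟩ := ih
    constructor
    · rw [Function.iterate_succ_apply']
      have h3 := L_isHomogeneous h1
      have h4 : d - 2*j - 2 = d - 2*(j+1) := by omega
      rwa [h4] at h3
    · intro hd
      rw [Function.iterate_succ_apply']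
      rcases lt_or_ge d (2*j) with h | h
      · rw [h2 h]; simp [L]
      · exact L_eq_zero_of_le_one h1 (by omega)

lemma homog_decomp {d : ℕ} (p : MvPolynomial (Fin (n+1)) ℝ) (hp : p.IsHomogeneous d) :
    ∃ h q : MvPolynomial (Fin (n+1)) ℝ, h.IsHomogeneous d ∧ L h = 0 ∧
      q.totalDegree ≤ d - 2 ∧
      ∀ x : Fin (n+1) → ℝ, (∑ i, x i ^ 2) = 1 →
        eval x p = eval x h + eval x q := by
  classical
  set Lp : ℕ → MvPolynomial (Fin (n+1)) ℝ := fun j => L^[j] p with hLpdef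
  have hLp : ∀ j, (Lp j).IsHomogeneous (d - 2*j) := fun j => (Lp_homog hp j).1
  have hLp0 : ∀ j, d < 2*j → Lp j = 0 := fun j => (Lp_homog hp j).2
  have hLpsucc : ∀ j, Lp (j+1) = L (Lp j) := fun j => Function.iterate_succ_apply' L j p
  set c : ℕ → ℝ := fun j => Nat.rec 1
    (fun j cj => - cj / ((2*(j+1)*((n+1) + 2*(d - 2*(j+1)) + 2*j) : ℕ) : ℝ)) j with hcdef
  have hc0 : c 0 = 1 := rfl
  have hcs : ∀ j, c (j+1)
      = - c j / ((2*(j+1)*((n+1) + 2*(d - 2*(j+1)) + 2*j) : ℕ) : ℝ) := fun j => rfl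
  have hne : ∀ j : ℕ, ((2*(j+1)*((n+1) + 2*(d - 2*(j+1)) + 2*j) : ℕ) : ℝ) ≠ 0 := by
    intro j
    have : 0 < 2*(j+1)*((n+1) + 2*(d - 2*(j+1)) + 2*j) := by positivity
    exact_mod_cast this.ne'
  have hrec : ∀ j, c (j+1) * ((2*(j+1)*((n+1) + 2*(d - 2*(j+1)) + 2*j) : ℕ) : ℝ) = - c j := by
    intro j
    rw [hcs j, div_mul_cancel₀ _ (hne j)]
  refine ⟨∑ j ∈ range (d+1), c j • (r2 n ^ j * Lp j),
         ∑ j ∈ range d, (- c (j+1)) • Lp (j+1), ?_, ?_, ?_, ?_⟩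
  · apply IsHomogeneous.sum
    intro j _
    rw [smul_eq_C_mul]
    apply IsHomogeneous.C_mul
    rcases le_or_gt (2*j) d with hj | hj
    · have := ((r2_isHomogeneous (n := n)).pow j).mul (hLp j)
      have h4 : 2*j + (d - 2*j) = d := by omega
      rwa [h4] at this
    · rw [hLp0 j hj, mul_zero]
      exact isHomogeneous_zero _ _ _
  · rw [L_sum]
    set T : ℕ → MvPolynomial (Fin (n+1)) ℝ := fun j => c j • (r2 n ^ j * Lp (j+1)) with hT
    have h0 : L (c 0 • (r2 n ^ 0 * Lp 0)) = T 0 := by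
      rw [L_smul, hT]
      simp only [pow_zero, one_mul, hc0, one_smul]
      rw [hLpsucc 0]
    have hstep : ∀ j, L (c (j+1) • (r2 n ^ (j+1) * Lp (j+1))) = T (j+1) - T j := by
      intro j
      rw [L_smul]
      rcases lt_or_ge d (2*(j+1)) with hd | hd
      · have z1 : Lp (j+1) = 0 := hLp0 _ hd
        have z2 : Lp (j+1+1) = 0 := hLp0 _ (by omega)
        simp [hT, z1, z2, L]
      · rw [key (hLp (j+1)) j, ← hLpsucc (j+1), smul_add, smul_smul, hrec j, hT]
        rw [neg_smul]
        abel
    rw [Finset.sum_range_succ']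
    rw [Finset.sum_congr rfl fun j _ => hstep j, h0, Finset.sum_range_sub T]
    have hTd : T d = 0 := by
      rw [hT]
      simp only []
      rw [hLp0 (d+1) (by omega), mul_zero, smul_zero]
    rw [hTd]
    abel
  · apply totalDegree_finsetSum_le
    intro j hj
    refine le_trans (totalDegree_smul_le _ _) (le_trans (hLp (j+1)).totalDegree_le ?_)
    omega
  · intro x hx
    have hr2 : eval x (r2 n) = 1 := by
      rw [r2]
      simpa using hx
    have hevalh : eval x (∑ j ∈ range (d+1), c j • (r2 n ^ j * Lp j))
        = ∑ j ∈ range (d+1), c j * eval x (Lp j) := by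
      rw [map_sum]
      refine Finset.sum_congr rfl fun j _ => ?_
      rw [smul_eq_C_mul, eval_mul, eval_C, eval_mul, eval_pow, hr2, one_pow, one_mul]
    have hevalq : eval x (∑ j ∈ range d, (- c (j+1)) • Lp (j+1))
        = ∑ j ∈ range d, - (c (j+1) * eval x (Lp (j+1))) := by
      rw [map_sum]
      refine Finset.sum_congr rfl fun j _ => ?_
      rw [smul_eq_C_mul, eval_mul, eval_C]
      ring
    rw [hevalh, hevalq, Finset.sum_range_succ', Finset.sum_neg_distrib]
    have hp0 : Lp 0 = p := rfl
    rw [hp0, hc0]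
    ring

lemma L_add (a b : MvPolynomial (Fin (n+1)) ℝ) : L (a + b) = L a + L b := by
  simp [L, Finset.sum_add_distrib]

lemma main (n D : ℕ) : ∀ (P : MvPolynomial (Fin (n+1)) ℝ), P.totalDegree ≤ D →
    ∃ H : ℕ → MvPolynomial (Fin (n+1)) ℝ,
      (∀ j, (H j).IsHomogeneous j ∧ L (H j) = 0) ∧
      (∀ x : Fin (n+1) → ℝ, (∑ i, x i ^ 2) = 1 →
        eval x P = ∑ j ∈ Finset.range (D+1), eval x (H j)) := by
  induction D using Nat.strong_induction_on with
  | _ D IH =>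
  intro P hP
  rcases Nat.eq_zero_or_pos D with hD0 | hD0
  · subst hD0
    have hhom : P.IsHomogeneous 0 := by
      rw [← totalDegree_zero_iff_isHomogeneous]
      omega
    refine ⟨fun j => if j = 0 then P else 0, ?_, ?_⟩
    · intro j
      by_cases hj : j = 0
      · subst hj
        simp only [if_pos rfl]
        exact ⟨hhom, L_eq_zero_of_le_one hhom (by omega)⟩
      · simp only [if_neg hj]
        exact ⟨isHomogeneous_zero _ _ _, by simp [L]⟩
    · intro x hx; simp
  · have hcomp : ∀ d : ℕ, ∃ h q : MvPolynomial (Fin (n+1)) ℝ,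
        h.IsHomogeneous d ∧ L h = 0 ∧ q.totalDegree ≤ d - 2 ∧
        ∀ x : Fin (n+1) → ℝ, (∑ i, x i ^ 2) = 1 →
          eval x (homogeneousComponent d P) = eval x h + eval x q :=
      fun d => homog_decomp _ (homogeneousComponent_isHomogeneous d P)
    choose h q hh hLh hq hev using hcomp
    set Q : MvPolynomial (Fin (n+1)) ℝ := ∑ d ∈ range (D+1), q d with hQ
    have hQdeg : Q.totalDegree ≤ D - 2 := by
      apply totalDegree_finsetSum_le
      intro d hd
      simp only [Finset.mem_range] at hd
      exact le_trans (hq d) (by omega)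
    obtain ⟨H', hH', hevQ⟩ := IH (D-2) (by omega) Q hQdeg
    refine ⟨fun j => h j + (if j ≤ D-2 then H' j else 0), ?_, ?_⟩
    · intro j
      constructor
      · apply (hh j).add
        split
        · exact (hH' j).1
        · exact isHomogeneous_zero _ _ _
      · rw [L_add, hLh j]
        split
        · rw [(hH' j).2]; simp
        · simp [L]
    · intro x hx
      have hPe : ∑ d ∈ range (D+1), homogeneousComponent d P = P := by
        conv_rhs => rw [← sum_homogeneousComponent P]
        refine (Finset.sum_subset ?_ ?_).symm
        · intro y hy
          simp only [Finset.mem_range] at hy ⊢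
          omega
        · intro y hy1 hy2
          apply homogeneousComponent_eq_zero
          simp only [Finset.mem_range] at hy1 hy2
          omega
      have hPsum : eval x P = ∑ d ∈ range (D+1), eval x (homogeneousComponent d P) := by
        conv_lhs => rw [← hPe]
        rw [map_sum]
      have step1 : eval x P = (∑ d ∈ range (D+1), eval x (h d)) + eval x Q := by
        rw [hPsum, hQ, map_sum, ← Finset.sum_add_distrib]
        exact Finset.sum_congr rfl fun d _ => hev d x hx
      have step2 : ∑ j ∈ range (D+1), eval x (h j + (if j ≤ D-2 then H' j else 0))
          = (∑ j ∈ range (D+1), eval x (h j))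
            + ∑ j ∈ range (D-2+1), eval x (H' j) := by
        have e1 : ∀ j ∈ range (D+1), eval x (h j + (if j ≤ D-2 then H' j else 0))
            = eval x (h j) + (if j ≤ D-2 then eval x (H' j) else 0) := by
          intro j _
          rw [map_add]
          split <;> simp
        rw [Finset.sum_congr rfl e1, Finset.sum_add_distrib]
        congr 1
        have e2 : ∑ j ∈ range (D+1), (if j ≤ D-2 then eval x (H' j) else 0)
            = ∑ j ∈ range (D-2+1), (if j ≤ D-2 then eval x (H' j) else 0) := by
          refine (Finset.sum_subset ?_ ?_).symm
          · intro y hy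
            simp only [Finset.mem_range] at hy ⊢
            omega
          · intro y _ hy2
            simp only [Finset.mem_range] at hy2
            rw [if_neg (by omega)]
        rw [e2]
        refine Finset.sum_congr rfl fun j hj => ?_
        simp only [Finset.mem_range] at hj
        rw [if_pos (by omega)]
      rw [step2, step1, hevQ x hx]

end SphH

/-- Every real polynomial `P` in `n+1` variables of total degree `D`
agrees, on the unit sphere of `ℝ^{n+1}`, with a sum `Σ_{j=0}^{D} H_j` where each `H_j`
is a homogeneous harmonic polynomial of degree `j` (a spherical harmonic). -/
theorem polynomial_is_sum_of_spherical_harmonics_on_sphere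
    (n : ℕ) (hn : 1 ≤ n) (D : ℕ)
    (P : MvPolynomial (Fin (n + 1)) ℝ) (hP : P.totalDegree ≤ D) :
    ∃ H : ℕ → MvPolynomial (Fin (n + 1)) ℝ,
      (∀ j ≤ D, (H j).IsHomogeneous j ∧
        (∑ i : Fin (n + 1), pderiv i (pderiv i (H j))) = 0) ∧
      (∀ x : Fin (n + 1) → ℝ, (∑ i, x i ^ 2) = 1 →
        eval x P = ∑ j ∈ Finset.range (D + 1), eval x (H j)) := by
  obtain ⟨H, hH, hev⟩ := SphH.main n D P hP
  exact ⟨H, fun j _ => ⟨(hH j).1, (hH j).2⟩, hev⟩
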